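/- For every real s and every p ∈ (0,1), one has s·(s + 2p·(1−s))·log((1−p)/p) − log( (1−p) + p·((1−p)/p)^{2s} ) ≥ 0. -/

import Mathlib

open Real Set

-- log x ≤ (x - x⁻¹)/2 for x ≥ 1
lemma aux_log (x : ℝ) (hx : 1 ≤ x) : Real.log x ≤ (x - x⁻¹)/2 := by
  have h0 : (0:ℝ) < x := lt_of_lt_of_le one_pos hx
  rw [← Real.sinh_log h0]
  rcases eq_or_lt_of_le (Real.log_nonneg hx) with h|h
  · rw [← h]; simp
  · exact (Real.self_lt_sinh_iff.mpr h).le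

-- derivative of chi
lemma chi_deriv (p : ℝ) (hp0 : 0 < p) (hp2 : p < 1/2) (t : ℝ)
    (h1 : 0 < p + (1-2*p)*t) (h2 : 0 < (1-p) - (1-2*p)*t) :
    HasDerivAt (fun t : ℝ => Real.log (p + (1-2*p)*t) - Real.log ((1-p) - (1-2*p)*t)
        - 2*t*Real.log ((1-p)/p))
      ((1-2*p)/(p + (1-2*p)*t) + (1-2*p)/((1-p) - (1-2*p)*t) - 2*Real.log ((1-p)/p)) t := by
  have hA : HasDerivAt (fun t : ℝ => Real.log (p + (1-2*p)*t)) ((1-2*p)/(p + (1-2*p)*t)) t := by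
    have : HasDerivAt (fun t : ℝ => p + (1-2*p)*t) (1-2*p) t := by
      simpa using ((hasDerivAt_id t).const_mul (1-2*p)).const_add p
    exact this.log h1.ne'
  have hB : HasDerivAt (fun t : ℝ => Real.log ((1-p) - (1-2*p)*t))
      (-(1-2*p)/((1-p) - (1-2*p)*t)) t := by
    have : HasDerivAt (fun t : ℝ => (1-p) - (1-2*p)*t) (-(1-2*p)) t := by
      simpa using (((hasDerivAt_id t).const_mul (1-2*p)).const_sub (1-p))
    exact this.log h2.ne'
  have hC : HasDerivAt (fun t : ℝ => 2*t*Real.log ((1-p)/p)) (2*Real.log ((1-p)/p)) t := by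
    simpa using ((hasDerivAt_id t).const_mul 2).mul_const (Real.log ((1-p)/p))
  have := (hA.sub hB).sub hC
  refine this.congr_deriv ?_
  ring

section chord
variable {p : ℝ}

lemma chi_concave (hp0 : 0 < p) (hp2 : p < 1/2) :
    ConcaveOn ℝ (Icc (0:ℝ) (1/2)) (fun t : ℝ => Real.log (p + (1-2*p)*t)
      - Real.log ((1-p) - (1-2*p)*t) - 2*t*Real.log ((1-p)/p)) := by
  have hd : 0 < 1-2*p := by linarith
  have hpos1 : ∀ t ∈ Icc (0:ℝ) (1/2), 0 < p + (1-2*p)*t := fun t ht =>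
    by nlinarith [ht.1, ht.2]
  have hpos2 : ∀ t ∈ Icc (0:ℝ) (1/2), 0 < (1-p) - (1-2*p)*t := fun t ht =>
    by nlinarith [ht.1, ht.2]
  have hder : ∀ t ∈ Icc (0:ℝ) (1/2), HasDerivAt (fun t : ℝ => Real.log (p + (1-2*p)*t)
      - Real.log ((1-p) - (1-2*p)*t) - 2*t*Real.log ((1-p)/p))
      ((1-2*p)/(p + (1-2*p)*t) + (1-2*p)/((1-p) - (1-2*p)*t) - 2*Real.log ((1-p)/p)) t :=
    fun t ht => chi_deriv p hp0 hp2 t (hpos1 t ht) (hpos2 t ht)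
  have hint : interior (Icc (0:ℝ) (1/2)) = Ioo (0:ℝ) (1/2) := interior_Icc
  refine AntitoneOn.concaveOn_of_deriv (convex_Icc _ _)
    (fun t ht => (hder t ht).continuousAt.continuousWithinAt)
    (fun t ht => by
      rw [hint] at ht
      exact ((hder t (Ioo_subset_Icc_self ht)).differentiableAt).differentiableWithinAt) ?_
  rw [hint]
  intro x hx y hy hxy
  rw [(hder x (Ioo_subset_Icc_self hx)).deriv, (hder y (Ioo_subset_Icc_self hy)).deriv]
  have h1x := hpos1 x (Ioo_subset_Icc_self hx); have h2x := hpos2 x (Ioo_subset_Icc_self hx)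
  have h1y := hpos1 y (Ioo_subset_Icc_self hy); have h2y := hpos2 y (Ioo_subset_Icc_self hy)
  have key : ∀ t : ℝ, 0 < p + (1-2*p)*t → 0 < (1-p) - (1-2*p)*t →
      (1-2*p)/(p + (1-2*p)*t) + (1-2*p)/((1-p) - (1-2*p)*t)
        = (1-2*p)/((p + (1-2*p)*t) * ((1-p) - (1-2*p)*t)) := by
    intro t h1 h2
    field_simp
    ring
  rw [key x h1x h2x, key y h1y h2y]
  have hAB : (p + (1-2*p)*x) * ((1-p) - (1-2*p)*x) ≤ (p + (1-2*p)*y) * ((1-p) - (1-2*p)*y) := by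
    nlinarith [hx.1, hy.2, mul_nonneg (mul_nonneg (le_of_lt hd) (le_of_lt hd))
      (mul_nonneg (sub_nonneg.2 hxy) (by nlinarith [hx.1.le, hy.2.le] : (0:ℝ) ≤ 1 - x - y))]
  have := div_le_div_of_nonneg_left hd.le (mul_pos h1x h2x) hAB
  linarith

lemma chi_zero (hp0 : 0 < p) (hp2 : p < 1/2) :
    Real.log (p + (1-2*p)*(0:ℝ)) - Real.log ((1-p) - (1-2*p)*(0:ℝ))
      - 2*(0:ℝ)*Real.log ((1-p)/p) = -Real.log ((1-p)/p) := by
  have hq : (0:ℝ) < 1-p := by linarith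
  rw [Real.log_div hq.ne' hp0.ne']
  norm_num

lemma chi_half (hp0 : 0 < p) (hp2 : p < 1/2) :
    Real.log (p + (1-2*p)*(1/2:ℝ)) - Real.log ((1-p) - (1-2*p)*(1/2:ℝ))
      - 2*(1/2:ℝ)*Real.log ((1-p)/p) = -Real.log ((1-p)/p) := by
  have e1 : p + (1-2*p)*(1/2:ℝ) = 1/2 := by ring
  have e2 : (1-p) - (1-2*p)*(1/2:ℝ) = 1/2 := by ring
  rw [e1, e2]
  ring

-- chordA: for t ∈ [0,1/2]
lemma chordA (hp0 : 0 < p) (hp2 : p < 1/2) {t : ℝ} (ht : t ∈ Icc (0:ℝ) (1/2)) :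
    p * Real.exp (2*t*Real.log ((1-p)/p)) * ((1-p) - (1-2*p)*t)
      ≤ (1-p) * (p + (1-2*p)*t) := by
  have hq : (0:ℝ) < 1-p := by linarith
  have hd : (0:ℝ) < 1-2*p := by linarith
  have h1 : 0 < p + (1-2*p)*t := by nlinarith [ht.1, ht.2]
  have h2 : 0 < (1-p) - (1-2*p)*t := by nlinarith [ht.1, ht.2]
  -- chi t ≥ -L via concavity
  have hcon := chi_concave hp0 hp2
  have ha : (0:ℝ) ≤ 1 - 2*t := by linarith [ht.2]
  have hb : (0:ℝ) ≤ 2*t := by linarith [ht.1]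
  have hmem0 : (0:ℝ) ∈ Icc (0:ℝ) (1/2) := by constructor <;> norm_num
  have hmemh : (1/2:ℝ) ∈ Icc (0:ℝ) (1/2) := by constructor <;> norm_num
  have hcomb := hcon.2 hmem0 hmemh ha hb (by ring)
  have hpt : (1 - 2*t) • (0:ℝ) + (2*t) • (1/2:ℝ) = t := by
    simp [smul_eq_mul]; ring
  rw [hpt] at hcomb
  simp only at hcomb
  rw [chi_zero hp0 hp2, chi_half hp0 hp2, smul_eq_mul, smul_eq_mul] at hcomb
  have hchi : Real.log (p + (1-2*p)*t) - Real.log ((1-p) - (1-2*p)*t)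
      - 2*t*Real.log ((1-p)/p) ≥ -Real.log ((1-p)/p) := by
    have heq : (1 - 2*t) * -Real.log ((1-p)/p) + 2*t * -Real.log ((1-p)/p)
        = -Real.log ((1-p)/p) := by ring
    linarith [hcomb, heq.ge]
  have hL : Real.log ((1-p)/p) = Real.log (1-p) - Real.log p := Real.log_div hq.ne' hp0.ne'
  have h2t : 2*t*Real.log ((1-p)/p)
      ≤ Real.log ((1-p) * (p + (1-2*p)*t)) - Real.log (p * ((1-p) - (1-2*p)*t)) := by
    rw [Real.log_mul hq.ne' h1.ne', Real.log_mul hp0.ne' h2.ne']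
    linarith [hchi, hL.le, hL.ge]
  have hE := Real.exp_le_exp.mpr h2t
  rw [Real.exp_sub, Real.exp_log (by positivity), Real.exp_log (by positivity)] at hE
  have hfin := mul_le_mul_of_nonneg_left hE (le_of_lt (mul_pos hp0 h2))
  calc p * Real.exp (2*t*Real.log ((1-p)/p)) * ((1-p) - (1-2*p)*t)
      = p * ((1-p) - (1-2*p)*t) * Real.exp (2*t*Real.log ((1-p)/p)) := by ring
    _ ≤ p * ((1-p) - (1-2*p)*t) * (((1-p) * (p + (1-2*p)*t)) / (p * ((1-p) - (1-2*p)*t))) := hfin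
    _ = (1-p) * (p + (1-2*p)*t) := mul_div_cancel₀ _ (mul_pos hp0 h2).ne'

-- chordB: for t ≤ 0
lemma chordB (hp0 : 0 < p) (hp2 : p < 1/2) {t : ℝ} (ht : t ≤ 0) :
    (1-p) * (p + (1-2*p)*t) ≤ p * Real.exp (2*t*Real.log ((1-p)/p)) * ((1-p) - (1-2*p)*t) := by
  have hq : (0:ℝ) < 1-p := by linarith
  have hd : (0:ℝ) < 1-2*p := by linarith
  have h2 : 0 < (1-p) - (1-2*p)*t := by nlinarith
  rcases le_or_gt (p + (1-2*p)*t) 0 with hneg | h1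
  · have : 0 < p * Real.exp (2*t*Real.log ((1-p)/p)) * ((1-p) - (1-2*p)*t) := by positivity
    nlinarith
  · -- chi monotone on [t,0], so chi t ≤ chi 0 = -L
    have hLle : 2 * Real.log ((1-p)/p) ≤ (1-2*p) / (p * (1-p)) := by
      have hx : (1:ℝ) ≤ (1-p)/p := by rw [le_div_iff₀ hp0]; linarith
      have := aux_log ((1-p)/p) hx
      have hinv : ((1-p)/p)⁻¹ = p/(1-p) := by field_simp
      rw [hinv] at this
      have he : ((1-p)/p - p/(1-p))/2 = ((1-p)^2 - p^2) / (2*(p*(1-p))) := by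
        field_simp
      rw [he] at this
      have h3 : (1-2*p)/(p*(1-p)) = 2 * (((1-p)^2 - p^2) / (2*(p*(1-p)))) := by
        field_simp; ring
      rw [h3]; linarith
    have hmono : MonotoneOn (fun u : ℝ => Real.log (p + (1-2*p)*u)
        - Real.log ((1-p) - (1-2*p)*u) - 2*u*Real.log ((1-p)/p)) (Icc t 0) := by
      have hpos1 : ∀ u ∈ Icc t (0:ℝ), 0 < p + (1-2*p)*u := fun u hu => by
        nlinarith [hu.1, hu.2]
      have hpos2 : ∀ u ∈ Icc t (0:ℝ), 0 < (1-p) - (1-2*p)*u := fun u hu => by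
        nlinarith [hu.1, hu.2]
      have hder : ∀ u ∈ Icc t (0:ℝ), HasDerivAt (fun u : ℝ => Real.log (p + (1-2*p)*u)
          - Real.log ((1-p) - (1-2*p)*u) - 2*u*Real.log ((1-p)/p))
          ((1-2*p)/(p + (1-2*p)*u) + (1-2*p)/((1-p) - (1-2*p)*u) - 2*Real.log ((1-p)/p)) u :=
        fun u hu => chi_deriv p hp0 hp2 u (hpos1 u hu) (hpos2 u hu)
      refine monotoneOn_of_hasDerivWithinAt_nonneg (convex_Icc _ _)
        (fun u hu => (hder u hu).continuousAt.continuousWithinAt)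
        (fun u hu => ((hder u (interior_subset hu)).hasDerivWithinAt)) ?_
      intro u hu
      rw [interior_Icc] at hu
      have hu' := Ioo_subset_Icc_self hu
      have h1u := hpos1 u hu'; have h2u := hpos2 u hu'
      have key : (1-2*p)/(p + (1-2*p)*u) + (1-2*p)/((1-p) - (1-2*p)*u)
          = (1-2*p)/((p + (1-2*p)*u) * ((1-p) - (1-2*p)*u)) := by
        field_simp; ring
      rw [key]
      have hprod : (p + (1-2*p)*u) * ((1-p) - (1-2*p)*u) ≤ p * (1-p) := by
        nlinarith [hu.2, hu'.1, mul_nonneg (mul_nonneg hd.le hd.le)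
          (mul_nonneg (neg_nonneg.2 hu.2.le) (by nlinarith [hu.2.le] : (0:ℝ) ≤ 1 - u))]
      have := div_le_div_of_nonneg_left hd.le (mul_pos h1u h2u) hprod
      linarith [hLle]
    have hchit := hmono (left_mem_Icc.mpr ht) (right_mem_Icc.mpr ht) ht
    simp only at hchit
    rw [chi_zero hp0 hp2] at hchit
    -- from chi t ≤ -L derive the product inequality
    have hL : Real.log ((1-p)/p) = Real.log (1-p) - Real.log p := Real.log_div hq.ne' hp0.ne'
    have h2t : Real.log ((1-p) * (p + (1-2*p)*t)) - Real.log (p * ((1-p) - (1-2*p)*t))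
        ≤ 2*t*Real.log ((1-p)/p) := by
      rw [Real.log_mul hq.ne' h1.ne', Real.log_mul hp0.ne' h2.ne']
      linarith [hchit, hL.le, hL.ge]
    have hE := Real.exp_le_exp.mpr h2t
    rw [Real.exp_sub, Real.exp_log (by positivity), Real.exp_log (by positivity)] at hE
    have hfin := mul_le_mul_of_nonneg_left hE (le_of_lt (mul_pos hp0 h2))
    calc (1-p) * (p + (1-2*p)*t)
        = p * ((1-p) - (1-2*p)*t) * (((1-p) * (p + (1-2*p)*t)) / (p * ((1-p) - (1-2*p)*t))) :=
          (mul_div_cancel₀ _ (mul_pos hp0 h2).ne').symm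
      _ ≤ p * ((1-p) - (1-2*p)*t) * Real.exp (2*t*Real.log ((1-p)/p)) := hfin
      _ = p * Real.exp (2*t*Real.log ((1-p)/p)) * ((1-p) - (1-2*p)*t) := by ring

-- derivative of psi
lemma psi_deriv (hp0 : 0 < p) (hp1 : p < 1) (t : ℝ) :
    HasDerivAt (fun u : ℝ => u*(u + 2*p*(1-u))*Real.log ((1-p)/p)
        - Real.log ((1-p) + p*Real.exp (2*u*Real.log ((1-p)/p))))
      (2*Real.log ((1-p)/p)*(p + (1-2*p)*t)
        - (p*Real.exp (2*t*Real.log ((1-p)/p))*(2*Real.log ((1-p)/p)))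
            / ((1-p) + p*Real.exp (2*t*Real.log ((1-p)/p)))) t := by
  set L := Real.log ((1-p)/p) with hLdef
  have hq : (0:ℝ) < 1-p := by linarith
  have funeq : (fun u : ℝ => u*(u + 2*p*(1-u))*L
      - Real.log ((1-p) + p*Real.exp (2*u*L)))
      = fun u : ℝ => ((1-2*p)*u^2 + 2*p*u)*L
      - Real.log ((1-p) + p*Real.exp (2*u*L)) := by
    funext u; ring_nf
  rw [funeq]
  have hpoly : HasDerivAt (fun u : ℝ => ((1-2*p)*u^2 + 2*p*u)*L)
      (((1-2*p)*(2*t) + 2*p)*L) t := by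
    have h1 : HasDerivAt (fun u : ℝ => (1-2*p)*u^2 + 2*p*u) ((1-2*p)*(2*t) + 2*p) t := by
      have ha : HasDerivAt (fun u : ℝ => u^2) (2*t) t := by
        simpa using hasDerivAt_pow 2 t
      have hb : HasDerivAt (fun u : ℝ => u) 1 t := hasDerivAt_id t
      exact ((ha.const_mul (1-2*p)).add (hb.const_mul (2*p))).congr_deriv (by ring)
    exact h1.mul_const L
  have hlog : HasDerivAt (fun u : ℝ => Real.log ((1-p) + p*Real.exp (2*u*L)))
      ((p*(Real.exp (2*t*L)*(2*L))) / ((1-p) + p*Real.exp (2*t*L))) t := by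
    have h2 : HasDerivAt (fun u : ℝ => 2*u*L) (2*L) t := by
      simpa using ((hasDerivAt_id t).const_mul 2).mul_const L
    have h3 : HasDerivAt (fun u : ℝ => (1-p) + p*Real.exp (2*u*L))
        (p*(Real.exp (2*t*L)*(2*L))) t := (h2.exp.const_mul p).const_add (1-p)
    have hne : (1-p) + p*Real.exp (2*t*L) ≠ 0 := by positivity
    exact h3.log hne
  have := hpoly.sub hlog
  refine this.congr_deriv ?_
  ring

-- psi nonneg for s ≤ 1/2, p < 1/2
lemma psi_nonneg_le_half (hp0 : 0 < p) (hp2 : p < 1/2) {s : ℝ} (hs : s ≤ 1/2) :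
    0 ≤ s*(s + 2*p*(1-s))*Real.log ((1-p)/p)
      - Real.log ((1-p) + p*Real.exp (2*s*Real.log ((1-p)/p))) := by
  set L := Real.log ((1-p)/p) with hLdef
  have hq : (0:ℝ) < 1-p := by linarith
  have hp1 : p < 1 := by linarith
  have hL : 0 < L := by
    rw [hLdef]
    apply Real.log_pos
    rw [lt_div_iff₀ hp0]; linarith
  set ψ : ℝ → ℝ := fun u => u*(u + 2*p*(1-u))*L - Real.log ((1-p) + p*Real.exp (2*u*L))
    with hψdef
  have hψ0 : ψ 0 = 0 := by
    simp [hψdef]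
  rcases le_or_gt 0 s with hs0 | hs0
  · -- monotone on [0,1/2]
    have hmono : MonotoneOn ψ (Icc (0:ℝ) (1/2)) := by
      refine monotoneOn_of_hasDerivWithinAt_nonneg (convex_Icc _ _)
        (fun u hu => (psi_deriv hp0 hp1 u).continuousAt.continuousWithinAt)
        (fun u hu => (psi_deriv hp0 hp1 u).hasDerivWithinAt) ?_
      intro u hu
      rw [interior_Icc] at hu
      have hE : (0:ℝ) < Real.exp (2*u*L) := Real.exp_pos _
      have hden : (0:ℝ) < (1-p) + p*Real.exp (2*u*L) := by positivity
      have hcA := chordA hp0 hp2 (Ioo_subset_Icc_self hu)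
      rw [← hLdef] at hcA ⊢
      rw [sub_nonneg, div_le_iff₀ hden]
      nlinarith [mul_le_mul_of_nonneg_left hcA (by positivity : (0:ℝ) ≤ 2*L)]
    have h0m : (0:ℝ) ∈ Icc (0:ℝ) (1/2) := by constructor <;> norm_num
    have hsm : s ∈ Icc (0:ℝ) (1/2) := ⟨hs0, hs⟩
    have := hmono h0m hsm hs0
    rw [hψ0] at this
    exact this
  · -- antitone on [s,0]
    have hanti : AntitoneOn ψ (Icc s 0) := by
      refine antitoneOn_of_hasDerivWithinAt_nonpos (convex_Icc _ _)
        (fun u hu => (psi_deriv hp0 hp1 u).continuousAt.continuousWithinAt)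
        (fun u hu => (psi_deriv hp0 hp1 u).hasDerivWithinAt) ?_
      intro u hu
      rw [interior_Icc] at hu
      have hE : (0:ℝ) < Real.exp (2*u*L) := Real.exp_pos _
      have hden : (0:ℝ) < (1-p) + p*Real.exp (2*u*L) := by positivity
      have hcB := chordB hp0 hp2 (le_of_lt hu.2)
      rw [← hLdef] at hcB ⊢
      rw [sub_nonpos, le_div_iff₀ hden]
      nlinarith [mul_le_mul_of_nonneg_left hcB (by positivity : (0:ℝ) ≤ 2*L)]
    have h0m : (0:ℝ) ∈ Icc s (0:ℝ) := right_mem_Icc.mpr hs0.le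
    have hsm : s ∈ Icc s (0:ℝ) := left_mem_Icc.mpr hs0.le
    have := hanti hsm h0m hs0.le
    rw [hψ0] at this
    exact this

-- full psi nonneg for p < 1/2 via symmetry s ↔ 1-s
lemma psi_nonneg (hp0 : 0 < p) (hp2 : p < 1/2) (s : ℝ) :
    0 ≤ s*(s + 2*p*(1-s))*Real.log ((1-p)/p)
      - Real.log ((1-p) + p*Real.exp (2*s*Real.log ((1-p)/p))) := by
  set L := Real.log ((1-p)/p) with hLdef
  have hq : (0:ℝ) < 1-p := by linarith
  rcases le_or_gt s (1/2) with hs | hs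
  · exact psi_nonneg_le_half hp0 hp2 hs
  · have hs' : 1 - s ≤ 1/2 := by linarith
    have key := psi_nonneg_le_half hp0 hp2 hs'
    rw [← hLdef] at key
    -- identity: (1-p) + p exp(2(1-s)L) = exp((1-2s)L) ((1-p) + p exp(2sL))
    have hpe : p * Real.exp L = 1 - p := by
      rw [hLdef, Real.exp_log (by positivity)]
      field_simp
    have h1 : Real.exp (2*(1-s)*L) = Real.exp L * Real.exp ((1-2*s)*L) := by
      rw [← Real.exp_add]; ring_nf
    have h2 : Real.exp ((1-2*s)*L) * Real.exp (2*s*L) = Real.exp L := by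
      rw [← Real.exp_add]; ring_nf
    have hident : (1-p) + p*Real.exp (2*(1-s)*L)
        = Real.exp ((1-2*s)*L) * ((1-p) + p*Real.exp (2*s*L)) := by
      rw [h1]
      have : p * (Real.exp L * Real.exp ((1-2*s)*L))
          = Real.exp ((1-2*s)*L) * (p * Real.exp L) := by ring
      rw [this, hpe]
      have : Real.exp ((1-2*s)*L) * (p * Real.exp (2*s*L))
          = p * (Real.exp ((1-2*s)*L) * Real.exp (2*s*L)) := by ring
      calc (1-p) + Real.exp ((1-2*s)*L) * (1-p)
          = p * Real.exp L + Real.exp ((1-2*s)*L) * (1-p) := by rw [hpe]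
        _ = p * (Real.exp ((1-2*s)*L) * Real.exp (2*s*L))
            + Real.exp ((1-2*s)*L) * (1-p) := by rw [h2]
        _ = Real.exp ((1-2*s)*L) * ((1-p) + p*Real.exp (2*s*L)) := by ring
    have hlogident : Real.log ((1-p) + p*Real.exp (2*(1-s)*L))
        = (1-2*s)*L + Real.log ((1-p) + p*Real.exp (2*s*L)) := by
      rw [hident, Real.log_mul (Real.exp_ne_zero _) (by positivity), Real.log_exp]
    rw [hlogident] at key
    nlinarith [key]
end chord

/-- For every real `s` and `p ∈ (0,1)`,
`s(s + 2p(1-s)) log((1-p)/p) - log((1-p) + p((1-p)/p)^{2s}) ≥ 0`. -/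
theorem h_s_nonneg (s p : ℝ) (hp0 : 0 < p) (hp1 : p < 1) :
    s * (s + 2*p*(1 - s)) * Real.log ((1 - p) / p)
      - Real.log ((1 - p) + p * ((1 - p) / p) ^ (2*s)) ≥ 0 := by
  have hq : (0:ℝ) < 1 - p := by linarith
  have hrpow : ((1 - p) / p) ^ (2*s) = Real.exp (2*s*Real.log ((1-p)/p)) := by
    rw [Real.rpow_def_of_pos (by positivity), mul_comm]
  rw [hrpow, ge_iff_le]
  rcases lt_trichotomy p (1/2) with hc | hc | hc
  · exact psi_nonneg hp0 hc s
  · subst hc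
    norm_num
  · -- apply to 1-p
    have key := psi_nonneg (p := 1-p) (by linarith) (by linarith) s
    have e1 : 1 - (1-p) = p := by ring
    rw [e1] at key
    set L := Real.log ((1-p)/p) with hLdef
    have hM : Real.log (p/(1-p)) = -L := by
      rw [hLdef, Real.log_div hp0.ne' hq.ne', Real.log_div hq.ne' hp0.ne']
      ring
    rw [hM] at key
    have hexp : Real.exp (2*s*(-L)) = (Real.exp (2*s*L))⁻¹ := by
      rw [← Real.exp_neg]; ring_nf
    have hident : p + (1-p)*Real.exp (2*s*(-L))
        = (Real.exp (2*s*L))⁻¹ * ((1-p) + p*Real.exp (2*s*L)) := by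
      rw [hexp]
      have hE : Real.exp (2*s*L) ≠ 0 := Real.exp_ne_zero _
      field_simp
      ring
    rw [hident] at key
    have hlog : Real.log ((Real.exp (2*s*L))⁻¹ * ((1-p) + p*Real.exp (2*s*L)))
        = -(2*s*L) + Real.log ((1-p) + p*Real.exp (2*s*L)) := by
      rw [Real.log_mul (by positivity) (by positivity), Real.log_inv, Real.log_exp]
    rw [hlog] at key
    nlinarith [key]
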